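/- Let r, R ∈ |F^×| with r ≤ R, and let f ∈ A^m(R) be not identically zero. Then for an (m−1)-tuple u = (u_1,…,u_{m−1}) over a generic residue class, the function f∘σ_u is z_m-distinguished in A^m(r), and moreover |f∘σ_u|_r = |f|_r. -/

import Mathlib

open MvPowerSeries Filter

set_option linter.unusedSectionVars false

namespace NA

variable (F : Type) [NormedField F] [IsUltrametricDist F]

/-- The value group `|F^×|` of a normed field, as a set of real numbers. -/
def VG : Set ℝ := {r | ∃ c : F, c ≠ 0 ∧ ‖c‖ = r}

lemma VG.pos {r : ℝ} (hr : r ∈ VG F) : 0 < r := by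
  obtain ⟨c, hc, rfl⟩ := hr
  exact norm_pos_iff.mpr hc

/-- The total degree `|γ|` of a multi-index. -/
def mdeg {m : ℕ} (γ : Fin m →₀ ℕ) : ℕ := γ.sum fun _ n => n

lemma mdeg_add {m : ℕ} (α β : Fin m →₀ ℕ) : mdeg (α + β) = mdeg α + mdeg β :=
  Finsupp.sum_add_index' (fun _ => rfl) (fun _ _ _ => rfl)

/-- The ring `A^m(r)` of power series converging on the closed ball of radius `r`:
those `f = Σ a_γ z^γ` with `|a_γ| r^{|γ|} → 0` as `|γ| → ∞`. -/
def A (m : ℕ) (r : ℝ) : Subring (MvPowerSeries (Fin m) F) where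
  carrier := {f | Tendsto (fun γ : Fin m →₀ ℕ => ‖coeff γ f‖ * r ^ mdeg γ)
    cofinite (nhds 0)}
  zero_mem' := by
    simp only [Set.mem_setOf_eq, map_zero, norm_zero, zero_mul]
    exact tendsto_const_nhds
  one_mem' := by
    refine tendsto_const_nhds.congr' ?_
    refine Filter.eventuallyEq_of_mem ((Set.finite_singleton (0 : Fin m →₀ ℕ)).compl_mem_cofinite) ?_
    intro γ hγ
    have : (γ : Fin m →₀ ℕ) ≠ 0 := by simpa using hγ
    simp [MvPowerSeries.coeff_one, this]
  add_mem' := by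
    intro f g hf hg
    simp only [Set.mem_setOf_eq] at hf hg ⊢
    rw [tendsto_zero_iff_abs_tendsto_zero] at hf hg ⊢
    refine squeeze_zero (fun γ => abs_nonneg _) (fun γ => ?_) (by simpa using hf.add hg)
    simp only [Function.comp_apply, abs_mul, abs_norm, map_add, ← add_mul]
    rw [abs_pow]
    exact mul_le_mul_of_nonneg_right (norm_add_le _ _) (by positivity)
  neg_mem' := by
    intro f hf
    simpa only [Set.mem_setOf_eq, map_neg, norm_neg] using hf
  mul_mem' := by
    intro f g hf hg
    simp only [Set.mem_setOf_eq] at hf hg ⊢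
    rw [tendsto_zero_iff_abs_tendsto_zero] at hf hg ⊢
    have habs : ∀ (h : MvPowerSeries (Fin m) F),
        (abs ∘ fun γ : Fin m →₀ ℕ => ‖coeff γ h‖ * r ^ mdeg γ)
          = fun γ => ‖coeff γ h‖ * |r| ^ mdeg γ := by
      intro h; funext γ
      simp [Function.comp_apply, abs_mul, abs_pow]
    rw [habs] at hf hg ⊢
    set v := fun (h : MvPowerSeries (Fin m) F) (γ : Fin m →₀ ℕ) =>
      ‖coeff γ h‖ * |r| ^ mdeg γ with hv
    have vnonneg : ∀ h γ, 0 ≤ v h γ := fun h γ => by positivity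
    have finlt : ∀ (h : MvPowerSeries (Fin m) F),
        Tendsto (v h) cofinite (nhds 0) → ∀ δ : ℝ, 0 < δ → {γ | ¬ v h γ < δ}.Finite := by
      intro h hh δ hδ
      have := (Metric.tendsto_nhds.mp hh) δ hδ
      rw [Filter.eventually_cofinite] at this
      refine this.subset ?_
      intro γ hγ
      simp only [Set.mem_setOf_eq, Real.dist_eq, sub_zero] at *
      intro hc; exact hγ (lt_of_abs_lt hc)
    have bound : ∀ (h : MvPowerSeries (Fin m) F),
        Tendsto (v h) cofinite (nhds 0) → ∃ M : ℝ, 1 ≤ M ∧ ∀ γ, v h γ ≤ M := by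
      intro h hh
      have h1 := finlt h hh 1 one_pos
      refine ⟨1 + ∑ γ ∈ h1.toFinset, v h γ,
        le_add_of_nonneg_right (Finset.sum_nonneg fun γ _ => vnonneg h γ), ?_⟩
      intro γ
      by_cases hγ : γ ∈ h1.toFinset
      · have := Finset.single_le_sum (f := v h) (fun γ _ => vnonneg h γ) hγ
        linarith
      · simp only [Set.Finite.mem_toFinset, Set.mem_setOf_eq, not_not] at hγ
        have hs : (0:ℝ) ≤ ∑ γ ∈ h1.toFinset, v h γ :=
          Finset.sum_nonneg fun γ _ => vnonneg h γ
        linarith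
    rw [Metric.tendsto_nhds]
    intro ε hε
    rw [Filter.eventually_cofinite]
    obtain ⟨Mf, hMf1, hMf⟩ := bound f hf
    obtain ⟨Mg, hMg1, hMg⟩ := bound g hg
    set M := max Mf Mg with hMdef
    have hM1 : (1:ℝ) ≤ M := le_trans hMf1 (le_max_left _ _)
    have hM0 : (0:ℝ) < M := lt_of_lt_of_le one_pos hM1
    set δ := ε / M with hδdef
    have hδ0 : 0 < δ := div_pos hε hM0
    have hSf := finlt f hf δ hδ0
    have hSg := finlt g hg δ hδ0
    refine ((hSf.prod hSg).image
      (fun p : (Fin m →₀ ℕ) × (Fin m →₀ ℕ) => p.1 + p.2)).subset ?_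
    intro γ hγ
    simp only [Set.mem_setOf_eq, Real.dist_eq, sub_zero] at hγ
    have hγ' : ε ≤ v (f * g) γ := by
      rw [abs_of_nonneg (vnonneg (f*g) γ)] at hγ
      exact not_lt.mp hγ
    have hne : (Finset.HasAntidiagonal.antidiagonal γ).Nonempty := ⟨(γ, 0), by simp⟩
    obtain ⟨p, hp, hple⟩ := IsUltrametricDist.exists_norm_finset_sum_le_of_nonempty hne
      (fun p : (Fin m →₀ ℕ) × (Fin m →₀ ℕ) => coeff p.1 f * coeff p.2 g)
    have hpsum : p.1 + p.2 = γ := Finset.HasAntidiagonal.mem_antidiagonal.mp hp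
    have key : v (f * g) γ ≤ v f p.1 * v g p.2 := by
      have hdeg : mdeg γ = mdeg p.1 + mdeg p.2 := by
        rw [← hpsum, mdeg_add]
      calc v (f * g) γ = ‖coeff γ (f * g)‖ * |r| ^ mdeg γ := rfl
        _ ≤ ‖coeff p.1 f * coeff p.2 g‖ * |r| ^ mdeg γ := by
            refine mul_le_mul_of_nonneg_right ?_ (by positivity)
            rw [MvPowerSeries.coeff_mul]
            exact hple
        _ = (‖coeff p.1 f‖ * |r| ^ mdeg p.1) * (‖coeff p.2 g‖ * |r| ^ mdeg p.2) := by
            rw [norm_mul, hdeg, pow_add]; ring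
    refine ⟨p, ⟨?_, ?_⟩, hpsum⟩
    · simp only [Set.mem_setOf_eq, not_lt]
      have h1 : ε ≤ v f p.1 * M := by
        refine hγ'.trans (key.trans ?_)
        exact mul_le_mul_of_nonneg_left ((hMg p.2).trans (le_max_right _ _)) (vnonneg f p.1)
      exact (div_le_iff₀ hM0).mpr h1
    · simp only [Set.mem_setOf_eq, not_lt]
      have h1 : ε ≤ M * v g p.2 := by
        refine hγ'.trans (key.trans ?_)
        exact mul_le_mul_of_nonneg_right ((hMf p.1).trans (le_max_left _ _)) (vnonneg g p.2)
      rw [hδdef, div_le_iff₀' hM0]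
      exact h1

lemma mem_A_iff {m : ℕ} {r : ℝ} {f : MvPowerSeries (Fin m) F} :
    f ∈ A F m r ↔ Tendsto (fun γ : Fin m →₀ ℕ => ‖coeff γ f‖ * r ^ mdeg γ)
      cofinite (nhds 0) := ⟨fun h => h, fun h => h⟩

instance {m : ℕ} : IsDomain (MvPowerSeries (Fin m) F) :=
  NoZeroDivisors.to_isDomain _

/-- The Gauss norm `|f|_r = sup_γ |a_γ| r^{|γ|}`. -/
noncomputable def nrm (r : ℝ) {m : ℕ} (f : MvPowerSeries (Fin m) F) : ℝ :=
  ⨆ γ : Fin m →₀ ℕ, ‖coeff γ f‖ * r ^ mdeg γ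

/-- For `0 < r ≤ R`, `A^m(R) ⊆ A^m(r)`. -/
lemma A_mono {m : ℕ} {r R : ℝ} (h0 : 0 < r) (hrR : r ≤ R) : A F m R ≤ A F m r := by
  intro f hf
  rw [mem_A_iff] at hf ⊢
  refine squeeze_zero (fun γ => by positivity) (fun γ => ?_) hf
  exact mul_le_mul_of_nonneg_left (pow_le_pow_left₀ h0.le hrR _) (norm_nonneg _)

/-- Evaluation of a power series at a point, as a (possibly junk) sum. -/
noncomputable def eval {m : ℕ} (f : MvPowerSeries (Fin m) F) (z : Fin m → F) : F :=
  ∑' γ : Fin m →₀ ℕ, coeff γ f * ∏ i, z i ^ (γ i)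

/-- The ring of integers `{a : |a| ≤ 1}` of `F`. -/
def O : Subring F where
  carrier := {a | ‖a‖ ≤ 1}
  zero_mem' := by simp
  one_mem' := by simp
  add_mem' := by
    intro a b ha hb
    exact (IsUltrametricDist.norm_add_le_max a b).trans (max_le ha hb)
  neg_mem' := by intro a ha; simpa using ha
  mul_mem' := by
    intro a b ha hb
    rw [Set.mem_setOf_eq, norm_mul]
    exact mul_le_one₀ ha (norm_nonneg b) hb

/-- The maximal ideal `{a : |a| < 1}` of the ring of integers. -/
def mIdeal : Ideal (O F) where
  carrier := {a | ‖(a : F)‖ < 1}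
  zero_mem' := by simp
  add_mem' := by
    intro a b ha hb
    exact lt_of_le_of_lt (IsUltrametricDist.norm_add_le_max (a : F) b) (max_lt ha hb)
  smul_mem' := by
    intro c a ha
    simp only [Set.mem_setOf_eq, smul_eq_mul] at ha ⊢
    rw [Subring.coe_mul, norm_mul]
    exact mul_lt_one_of_nonneg_of_lt_one_right c.2 (norm_nonneg _) ha

/-- The residue class field of `F`. -/
def Res := O F ⧸ mIdeal F

noncomputable instance : CommRing (Res F) := by unfold Res; infer_instance

/-- Reduction of an element of absolute value at most `1` to the residue field. -/
noncomputable def red (a : F) (h : ‖a‖ ≤ 1) : Res F :=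
  Ideal.Quotient.mk (mIdeal F) ⟨a, h⟩

/-- The ring of entire functions on `F^m`: power series lying in every `A^m(r)`. -/
def Ent (m : ℕ) : Subring (MvPowerSeries (Fin m) F) where
  carrier := {f | ∀ r ∈ VG F, f ∈ A F m r}
  zero_mem' := fun r _ => (A F m r).zero_mem
  one_mem' := fun r _ => (A F m r).one_mem
  add_mem' := fun hf hg r hr => (A F m r).add_mem (hf r hr) (hg r hr)
  neg_mem' := fun hf r hr => (A F m r).neg_mem (hf r hr)
  mul_mem' := fun hf hg r hr => (A F m r).mul_mem (hf r hr) (hg r hr)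

lemma mem_Ent_iff {m : ℕ} {f : MvPowerSeries (Fin m) F} :
    f ∈ Ent F m ↔ ∀ r ∈ VG F, f ∈ A F m r := Iff.rfl

/-- `d` is a greatest common divisor of the family `s`. -/
def IsGCDOf {α : Type*} [CommRing α] {ι : Type*} (d : α) (s : ι → α) : Prop :=
  (∀ i, d ∣ s i) ∧ ∀ e : α, (∀ i, e ∣ s i) → e ∣ d

section LastVariable

variable (m : ℕ)

/-- The subring of power series in `m+1` variables not depending on the last variable. -/
def indepLast : Subring (MvPowerSeries (Fin (m+1)) F) where
  carrier := {f | ∀ γ : Fin (m+1) →₀ ℕ, γ (Fin.last m) ≠ 0 → coeff γ f = 0}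
  zero_mem' := by intro γ _; simp
  one_mem' := by
    intro γ hγ
    have h : γ ≠ 0 := fun h => hγ (by simp [h])
    simp [MvPowerSeries.coeff_one, h]
  add_mem' := by
    intro f g hf hg γ hγ
    simp [map_add, hf γ hγ, hg γ hγ]
  neg_mem' := by
    intro f hf γ hγ
    simp [hf γ hγ]
  mul_mem' := by
    intro f g hf hg γ hγ
    rw [MvPowerSeries.coeff_mul]
    refine Finset.sum_eq_zero fun p hp => ?_
    have hpsum : p.1 + p.2 = γ := Finset.HasAntidiagonal.mem_antidiagonal.mp hp
    by_cases h1 : p.1 (Fin.last m) = 0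
    · have h2 : p.2 (Fin.last m) ≠ 0 := by
        intro h2
        apply hγ
        rw [← hpsum, Finsupp.add_apply, h1, h2]
      rw [hg p.2 h2, mul_zero]
    · rw [hf p.1 h1, zero_mul]

/-- The ring `A^{m-1}(r)`: analytic functions not depending on the last variable. -/
noncomputable def Aprev (r : ℝ) : Subring (MvPowerSeries (Fin (m+1)) F) :=
  A F (m+1) r ⊓ indepLast F m

lemma Aprev_le (r : ℝ) : Aprev F m r ≤ A F (m+1) r := inf_le_left

lemma X_mem (r : ℝ) {k : ℕ} (i : Fin k) : (X i : MvPowerSeries (Fin k) F) ∈ A F k r := by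
  rw [mem_A_iff]
  refine tendsto_const_nhds.congr' ?_
  refine Filter.eventuallyEq_of_mem
    ((Set.finite_singleton (Finsupp.single i 1)).compl_mem_cofinite) ?_
  intro γ hγ
  have h : γ ≠ Finsupp.single i 1 := by simpa using hγ
  simp [MvPowerSeries.X, MvPowerSeries.coeff_monomial, h]

/-- The last coordinate function `z_m` as an element of `A^m(r)`. -/
noncomputable def zmA (r : ℝ) : A F (m+1) r :=
  ⟨X (Fin.last m), X_mem F r (Fin.last m)⟩

/-- Interpret a polynomial `W ∈ A^{m-1}(r)[z_m]` as an analytic function in `A^m(r)`. -/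
noncomputable def toAm (r : ℝ) (W : Polynomial (Aprev F m r)) : A F (m+1) r :=
  Polynomial.eval₂ (Subring.inclusion (Aprev_le F m r)) (zmA F m r) W

/-- `W ∈ A^{m-1}(r)[z_m]` is a Weierstrass polynomial of degree `n = deg W`:
it is monic and `|W|_r = r^n`. -/
def IsWeierstrass (r : ℝ) (W : Polynomial (Aprev F m r)) : Prop :=
  W.Monic ∧ nrm F r ((toAm F m r W : A F (m+1) r) : MvPowerSeries (Fin (m+1)) F)
    = r ^ W.natDegree

/-- The coefficient `A_j` of `z_m^j` when `f` is written as `Σ_j A_j(z') z_m^j`,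
viewed as a power series not involving the last variable. -/
noncomputable def slice (f : MvPowerSeries (Fin (m+1)) F) (j : ℕ) :
    MvPowerSeries (Fin (m+1)) F :=
  fun γ => if γ (Fin.last m) = 0 then
    coeff (γ + Finsupp.single (Fin.last m) j) f else 0

/-- `f` is `z_m`-distinguished of degree `n` in `A^m(r)`: writing `f = Σ_j A_j z_m^j`,
`A_n` is a unit in `A^{m-1}(r)`, `|f|_r = |A_n|_r r^n`, and `|A_j|_r r^j < |A_n|_r r^n`
for `j > n`. -/
def IsDistinguished (r : ℝ) (f : MvPowerSeries (Fin (m+1)) F) (n : ℕ) : Prop :=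
  (∃ h : slice F m f n ∈ Aprev F m r, IsUnit (⟨slice F m f n, h⟩ : Aprev F m r)) ∧
  nrm F r f = nrm F r (slice F m f n) * r ^ n ∧
  ∀ j : ℕ, n < j → nrm F r (slice F m f j) * r ^ j < nrm F r (slice F m f n) * r ^ n

/-- The linear forms `z_i + u_i z_m` (and `z_m` for `i = m`) defining
the change of variables `σ_u`. -/
noncomputable def linSub (u : Fin m → F) (i : Fin (m+1)) : MvPolynomial (Fin (m+1)) F :=
  MvPolynomial.X i + (if h : (i : ℕ) < m then
    MvPolynomial.C (u ⟨i, h⟩) * MvPolynomial.X (Fin.last m) else 0)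

/-- The composition `f ∘ σ_u`, where
`σ_u(z_1,…,z_m) = (z_1 + u_1 z_m, …, z_{m-1} + u_{m-1} z_m, z_m)`. -/
noncomputable def sigmaSub (u : Fin m → F) (f : MvPowerSeries (Fin (m+1)) F) :
    MvPowerSeries (Fin (m+1)) F :=
  fun δ => ∑ t ∈ Finset.Nat.antidiagonalTuple (m+1) (mdeg δ),
    coeff (Finsupp.equivFunOnFinite.symm t) f *
      MvPolynomial.coeff δ (∏ i, linSub F m u i ^ t i)

end LastVariable

/-- The formal partial derivative `∂f/∂z_j` of a power series. -/
noncomputable def pderiv {m : ℕ} (j : Fin m) (f : MvPowerSeries (Fin m) F) :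
    MvPowerSeries (Fin m) F :=
  fun γ => ((γ j + 1 : ℕ) : F) * coeff (γ + Finsupp.single j 1) f


section Helpers

lemma mdeg_eq_sum {m : ℕ} (γ : Fin m →₀ ℕ) : mdeg γ = ∑ i, γ i :=
  Finsupp.sum_fintype _ _ (fun _ => rfl)

lemma mdeg_single {m : ℕ} (i : Fin m) (n : ℕ) : mdeg (Finsupp.single i n) = n := by
  rw [mdeg]; exact Finsupp.sum_single_index rfl

lemma mdeg_eq_zero_iff {m : ℕ} {γ : Fin m →₀ ℕ} : mdeg γ = 0 ↔ γ = 0 := by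
  rw [mdeg_eq_sum, Finset.sum_eq_zero_iff]
  constructor
  · intro h; ext i; exact h i (Finset.mem_univ i)
  · rintro rfl i _; rfl

lemma finite_mdeg_le (m N : ℕ) : {γ : Fin m →₀ ℕ | mdeg γ ≤ N}.Finite := by
  have hsub : {γ : Fin m →₀ ℕ | mdeg γ ≤ N} ⊆
      Finsupp.equivFunOnFinite.symm '' (Set.pi Set.univ fun _ : Fin m => Set.Iic N) := by
    intro γ hγ
    refine ⟨⇑γ, fun i _ => ?_, by simp⟩
    simp only [Set.mem_Iic]
    calc γ i ≤ ∑ j, γ j :=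
          Finset.single_le_sum (f := fun j => γ j) (fun _ _ => Nat.zero_le _) (Finset.mem_univ i)
      _ = mdeg γ := (mdeg_eq_sum γ).symm
      _ ≤ N := hγ
  exact ((Set.Finite.pi fun _ => Set.finite_Iic N).image _).subset hsub

lemma norm_sum_le_max {ι : Type*} (s : Finset ι) (g : ι → F) {B : ℝ} (hB : 0 ≤ B)
    (h : ∀ i ∈ s, ‖g i‖ ≤ B) : ‖∑ i ∈ s, g i‖ ≤ B := by
  rcases s.eq_empty_or_nonempty with rfl | hs
  · simpa using hB
  · obtain ⟨i, hi, hle⟩ := IsUltrametricDist.exists_norm_finset_sum_le_of_nonempty hs g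
    exact hle.trans (h i hi)

lemma tendsto_of_shell_bound {m : ℕ} (v : (Fin m →₀ ℕ) → ℝ) (hv : ∀ γ, 0 ≤ v γ)
    (h : ∀ ε : ℝ, 0 < ε → ∃ N, ∀ γ, N < mdeg γ → v γ < ε) :
    Tendsto v cofinite (nhds 0) := by
  rw [Metric.tendsto_nhds]
  intro ε hε
  rw [Filter.eventually_cofinite]
  obtain ⟨N, hN⟩ := h ε hε
  refine (finite_mdeg_le m N).subset ?_
  intro γ hγ
  simp only [Set.mem_setOf_eq, Real.dist_eq, sub_zero, abs_of_nonneg (hv γ)] at hγ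
  by_contra hc
  exact hγ (hN γ (not_le.mp hc))

lemma shell_bound_of_tendsto {m : ℕ} (v : (Fin m →₀ ℕ) → ℝ)
    (h : Tendsto v cofinite (nhds 0)) {ε : ℝ} (hε : 0 < ε) :
    ∃ N, ∀ γ, N < mdeg γ → v γ < ε := by
  classical
  have hfin : {γ : Fin m →₀ ℕ | ¬ v γ < ε}.Finite := by
    have h2 := (Metric.tendsto_nhds.mp h) ε hε
    rw [Filter.eventually_cofinite] at h2
    refine h2.subset fun γ hγ => ?_
    simp only [Set.mem_setOf_eq, Real.dist_eq, sub_zero] at *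
    exact fun hc => hγ (lt_of_abs_lt hc)
  refine ⟨hfin.toFinset.sup mdeg, fun γ hγ => ?_⟩
  by_contra hc
  exact absurd (Finset.le_sup (f := mdeg) (hfin.mem_toFinset.mpr hc)) (not_le.mpr hγ)

lemma nrm_le {m : ℕ} {r B : ℝ} {f : MvPowerSeries (Fin m) F}
    (h : ∀ γ, ‖coeff γ f‖ * r ^ mdeg γ ≤ B) : nrm F r f ≤ B :=
  ciSup_le h

lemma le_nrm {m : ℕ} {r B : ℝ} {f : MvPowerSeries (Fin m) F}
    (h : ∀ γ, ‖coeff γ f‖ * r ^ mdeg γ ≤ B) (γ : Fin m →₀ ℕ) :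
    ‖coeff γ f‖ * r ^ mdeg γ ≤ nrm F r f :=
  le_ciSup ⟨B, by rintro x ⟨γ', rfl⟩; exact h γ'⟩ γ

/-- Polynomials all of whose coefficients have norm at most 1. -/
def polyO (k : ℕ) : Subring (MvPolynomial (Fin k) F) where
  carrier := {p | ∀ δ : Fin k →₀ ℕ, ‖MvPolynomial.coeff δ p‖ ≤ 1}
  zero_mem' := by intro δ; simp
  one_mem' := by
    intro δ
    rw [MvPolynomial.coeff_one]
    split <;> simp
  add_mem' := by
    intro p q hp hq δ
    rw [MvPolynomial.coeff_add]
    exact (IsUltrametricDist.norm_add_le_max _ _).trans (max_le (hp δ) (hq δ))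
  neg_mem' := by
    intro p hp δ
    rw [MvPolynomial.coeff_neg, norm_neg]
    exact hp δ
  mul_mem' := by
    intro p q hp hq δ
    rw [MvPolynomial.coeff_mul]
    refine norm_sum_le_max F _ _ zero_le_one fun x _ => ?_
    rw [norm_mul]
    exact mul_le_one₀ (hp x.1) (norm_nonneg _) (hq x.2)

lemma X_mem_polyO {k : ℕ} (i : Fin k) :
    (MvPolynomial.X i : MvPolynomial (Fin k) F) ∈ polyO F k := by
  intro δ
  rw [MvPolynomial.coeff_X']
  split <;> simp

lemma C_mem_polyO {k : ℕ} {a : F} (ha : ‖a‖ ≤ 1) :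
    (MvPolynomial.C a : MvPolynomial (Fin k) F) ∈ polyO F k := by
  intro δ
  rw [MvPolynomial.coeff_C]
  split <;> simpa

lemma linSub_mem_polyO (m : ℕ) (u : Fin m → F) (hu : ∀ j, ‖u j‖ ≤ 1) (i : Fin (m+1)) :
    linSub F m u i ∈ polyO F (m+1) := by
  rw [linSub]
  refine add_mem (X_mem_polyO F i) ?_
  split
  · exact mul_mem (C_mem_polyO F (hu _)) (X_mem_polyO F _)
  · exact zero_mem _

/-- Substituting `X_i ↦ 0` for `i < m` and `X_m ↦ X`. -/
noncomputable def toUni (m : ℕ) : MvPolynomial (Fin (m+1)) F →+* Polynomial F :=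
  (MvPolynomial.aeval fun i : Fin (m+1) =>
    if i = Fin.last m then (Polynomial.X : Polynomial F) else 0).toRingHom

lemma coeff_toUni (m : ℕ) (p : MvPolynomial (Fin (m+1)) F) (n : ℕ) :
    (toUni F m p).coeff n = MvPolynomial.coeff (Finsupp.single (Fin.last m) n) p := by
  induction p using MvPolynomial.induction_on' with
  | add p q hp hq => simp [map_add, Polynomial.coeff_add, MvPolynomial.coeff_add, hp, hq]
  | monomial δ a =>
    rw [toUni, AlgHom.toRingHom_eq_coe, RingHom.coe_coe, MvPolynomial.aeval_monomial,
      MvPolynomial.coeff_monomial]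
    by_cases hδ : δ.support ⊆ {Fin.last m}
    · obtain ⟨c, rfl⟩ : ∃ c, δ = Finsupp.single (Fin.last m) c :=
        ⟨δ (Fin.last m), Finsupp.support_subset_singleton.mp hδ⟩
      rw [Finsupp.prod_single_index (by simp), if_pos rfl]
      have halg : (algebraMap F (Polynomial F)) a = Polynomial.C a := rfl
      rw [halg, Polynomial.coeff_C_mul, Polynomial.coeff_X_pow]
      have hiff : (Finsupp.single (Fin.last m) c : Fin (m+1) →₀ ℕ)
          = Finsupp.single (Fin.last m) n ↔ c = n :=
        ⟨fun h => by simpa using DFunLike.congr_fun h (Fin.last m), fun h => by rw [h]⟩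
      by_cases hn : n = c
      · rw [if_pos hn, if_pos (hiff.mpr hn.symm), mul_one]
      · rw [if_neg hn, if_neg (fun hc => hn (hiff.mp hc).symm), mul_zero]
    · obtain ⟨i, hi, hine⟩ := Finset.not_subset.mp hδ
      have hilast : i ≠ Fin.last m := by simpa using hine
      have hδi : δ i ≠ 0 := Finsupp.mem_support_iff.mp hi
      have hprod : (δ.prod fun j k =>
          (if j = Fin.last m then (Polynomial.X : Polynomial F) else 0) ^ k) = 0 := by
        rw [Finsupp.prod]
        refine Finset.prod_eq_zero hi ?_
        rw [if_neg hilast, zero_pow hδi]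
      rw [hprod, mul_zero, Polynomial.coeff_zero]
      have hne : δ ≠ Finsupp.single (Fin.last m) n := by
        intro hc
        apply hδi
        rw [hc, Finsupp.single_apply, if_neg (fun h => hilast h.symm)]
      rw [if_neg hne]

lemma toUni_linSub_prod (m : ℕ) (u : Fin m → F) (t : Fin (m+1) → ℕ) :
    toUni F m (∏ i, linSub F m u i ^ t i) =
      Polynomial.C (∏ j : Fin m, u j ^ t j.castSucc) * Polynomial.X ^ (∑ i, t i) := by
  have hlin : ∀ i : Fin (m+1), toUni F m (linSub F m u i) =
      Polynomial.C (if h : (i : ℕ) < m then u ⟨i, h⟩ else 1) * Polynomial.X := by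
    intro i
    rw [linSub, map_add]
    by_cases h : (i : ℕ) < m
    · have hine : i ≠ Fin.last m := by
        intro hc; rw [hc] at h; simp at h
      rw [dif_pos h, dif_pos h, map_mul]
      have h1 : toUni F m (MvPolynomial.X i) = 0 := by
        rw [toUni, AlgHom.toRingHom_eq_coe, RingHom.coe_coe, MvPolynomial.aeval_X,
          if_neg hine]
      have h2 : toUni F m (MvPolynomial.C (u ⟨i, h⟩)) = Polynomial.C (u ⟨i, h⟩) := by
        rw [toUni, AlgHom.toRingHom_eq_coe, RingHom.coe_coe, MvPolynomial.aeval_C]; rfl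
      have h3 : toUni F m (MvPolynomial.X (Fin.last m)) = Polynomial.X := by
        rw [toUni, AlgHom.toRingHom_eq_coe, RingHom.coe_coe, MvPolynomial.aeval_X, if_pos rfl]
      rw [h1, h2, h3, zero_add]
    · have hieq : i = Fin.last m := by
        have h2 := i.isLt
        apply Fin.ext
        rw [Fin.val_last]
        omega
      rw [dif_neg h, dif_neg h, map_zero, add_zero]
      rw [toUni, AlgHom.toRingHom_eq_coe, RingHom.coe_coe, MvPolynomial.aeval_X,
        if_pos hieq, map_one, one_mul]
  rw [map_prod]
  have : ∀ i : Fin (m+1), toUni F m (linSub F m u i ^ t i) =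
      Polynomial.C ((if h : (i : ℕ) < m then u ⟨i, h⟩ else 1) ^ t i) * Polynomial.X ^ t i := by
    intro i
    rw [map_pow, hlin, mul_pow, ← Polynomial.C_pow]
  rw [Finset.prod_congr rfl fun i _ => this i, Finset.prod_mul_distrib,
    Finset.prod_pow_eq_pow_sum, ← map_prod]
  congr 2
  rw [Fin.prod_univ_castSucc]
  have hlast : (if h : ((Fin.last m : Fin (m+1)) : ℕ) < m then u ⟨Fin.last m, h⟩ else 1)
      ^ t (Fin.last m) = 1 := by
    rw [dif_neg (by simp), one_pow]
  rw [hlast, mul_one]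
  refine Finset.prod_congr rfl fun j _ => ?_
  have hjlt : ((j.castSucc : Fin (m+1)) : ℕ) < m := by simpa using j.isLt
  rw [dif_pos hjlt]
  have hje : (⟨((j.castSucc : Fin (m+1)) : ℕ), hjlt⟩ : Fin m) = j := Fin.ext (by simp)
  rw [hje]

lemma antidiagonalTuple_nonempty (m n : ℕ) :
    (Finset.Nat.antidiagonalTuple (m+1) n).Nonempty := by
  refine ⟨fun i => if i = Fin.last m then n else 0, ?_⟩
  rw [Finset.Nat.mem_antidiagonalTuple]
  simp

lemma mdeg_symm_tuple {m : ℕ} (t : Fin m → ℕ) :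
    mdeg (Finsupp.equivFunOnFinite.symm t) = ∑ i, t i := by
  rw [mdeg_eq_sum]
  simp

lemma coeff_sigmaSub_single (m : ℕ) (u : Fin m → F) (f : MvPowerSeries (Fin (m+1)) F)
    (d : ℕ) :
    coeff (Finsupp.single (Fin.last m) d) (sigmaSub F m u f) =
      ∑ t ∈ Finset.Nat.antidiagonalTuple (m+1) d,
        coeff (Finsupp.equivFunOnFinite.symm t) f * ∏ j : Fin m, u j ^ t j.castSucc := by
  rw [coeff_apply]
  show (∑ t ∈ Finset.Nat.antidiagonalTuple (m+1) (mdeg (Finsupp.single (Fin.last m) d)),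
    coeff (Finsupp.equivFunOnFinite.symm t) f *
      MvPolynomial.coeff (Finsupp.single (Fin.last m) d) (∏ i, linSub F m u i ^ t i)) = _
  rw [mdeg_single]
  refine Finset.sum_congr rfl fun t ht => ?_
  congr 1
  rw [← coeff_toUni, toUni_linSub_prod, Finset.Nat.mem_antidiagonalTuple.mp ht,
    Polynomial.coeff_C_mul, Polynomial.coeff_X_pow, if_pos rfl, mul_one]

lemma coeff_sigmaSub_bound (m : ℕ) (u : Fin m → F) (hu : ∀ j, ‖u j‖ ≤ 1)
    (f : MvPowerSeries (Fin (m+1)) F) (δ : Fin (m+1) →₀ ℕ) :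
    ∃ γ : Fin (m+1) →₀ ℕ, mdeg γ = mdeg δ ∧
      ‖coeff δ (sigmaSub F m u f)‖ ≤ ‖coeff γ f‖ := by
  rw [coeff_apply]
  show ∃ γ, mdeg γ = mdeg δ ∧ ‖∑ t ∈ Finset.Nat.antidiagonalTuple (m+1) (mdeg δ),
    coeff (Finsupp.equivFunOnFinite.symm t) f *
      MvPolynomial.coeff δ (∏ i, linSub F m u i ^ t i)‖ ≤ _
  obtain ⟨t, ht, hle⟩ := IsUltrametricDist.exists_norm_finset_sum_le_of_nonempty
    (antidiagonalTuple_nonempty m (mdeg δ)) (fun t => coeff (Finsupp.equivFunOnFinite.symm t) f *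
      MvPolynomial.coeff δ (∏ i, linSub F m u i ^ t i))
  refine ⟨Finsupp.equivFunOnFinite.symm t, ?_, ?_⟩
  · rw [mdeg_symm_tuple]
    exact Finset.Nat.mem_antidiagonalTuple.mp ht
  · refine hle.trans ?_
    rw [norm_mul]
    have hmem : (∏ i, linSub F m u i ^ t i) ∈ polyO F (m+1) :=
      prod_mem fun i _ => pow_mem (linSub_mem_polyO F m u hu i) _
    exact mul_le_of_le_one_right (norm_nonneg _) (hmem δ)

end Helpers


section Inverse

lemma finite_ge_of_tendsto {m : ℕ} (v : (Fin m →₀ ℕ) → ℝ)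
    (h : Tendsto v cofinite (nhds 0)) {ε : ℝ} (hε : 0 < ε) : {γ | ε ≤ v γ}.Finite := by
  have h2 := (Metric.tendsto_nhds.mp h) ε hε
  rw [Filter.eventually_cofinite] at h2
  refine h2.subset fun γ hγ => ?_
  simp only [Set.mem_setOf_eq, Real.dist_eq, sub_zero] at *
  exact fun hc => absurd (lt_of_abs_lt hc) (not_lt.mpr hγ)

lemma mdeg_zero (m : ℕ) : mdeg (0 : Fin m →₀ ℕ) = 0 := mdeg_eq_zero_iff.mpr rfl

lemma C_mem_A {n : ℕ} (r : ℝ) (a : F) : (MvPowerSeries.C (σ := Fin n) a) ∈ A F n r := by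
  rw [mem_A_iff]
  refine tendsto_const_nhds.congr' ?_
  refine Filter.eventuallyEq_of_mem ((Set.finite_singleton (0 : Fin n →₀ ℕ)).compl_mem_cofinite) ?_
  intro γ hγ
  have hγ0 : (γ : Fin n →₀ ℕ) ≠ 0 := by simpa using hγ
  simp [MvPowerSeries.coeff_C, hγ0]

lemma C_mem_indepLast {m : ℕ} (a : F) : (MvPowerSeries.C (σ := Fin (m+1)) a) ∈ indepLast F m := by
  intro γ hγ
  have hγ0 : γ ≠ 0 := fun h => hγ (by rw [h]; rfl)
  rw [MvPowerSeries.coeff_C, if_neg hγ0]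

lemma pow_coeff_bound {n : ℕ} {r : ℝ} (hr : 0 < r) (x : MvPowerSeries (Fin n) F)
    {q : ℝ} (hx : ∀ γ : Fin n →₀ ℕ, ‖coeff γ x‖ * r ^ mdeg γ ≤ q) :
    ∀ (k : ℕ) (γ : Fin n →₀ ℕ), ‖coeff γ (x ^ k)‖ * r ^ mdeg γ ≤ q ^ k := by
  have hq0 : 0 ≤ q := le_trans (by positivity) (hx 0)
  intro k
  induction k with
  | zero =>
    intro γ
    rw [pow_zero, pow_zero, MvPowerSeries.coeff_one]
    split
    · subst ‹γ = 0›
      rw [mdeg_zero, pow_zero, mul_one, norm_one]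
    · rw [norm_zero, zero_mul]
      exact zero_le_one
  | succ k ih =>
    intro γ
    have hrpow : (0:ℝ) < r ^ mdeg γ := pow_pos hr _
    rw [pow_succ, mul_comm (x ^ k) x, MvPowerSeries.coeff_mul]
    have hb : ‖∑ p ∈ Finset.HasAntidiagonal.antidiagonal γ, coeff p.1 x * coeff p.2 (x ^ k)‖
        ≤ q ^ (k+1) / r ^ mdeg γ := by
      refine norm_sum_le_max F _ _ (by positivity) fun p hp => ?_
      have hpsum : p.1 + p.2 = γ := Finset.HasAntidiagonal.mem_antidiagonal.mp hp
      rw [le_div_iff₀ hrpow, norm_mul, ← hpsum, mdeg_add, pow_add]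
      calc ‖coeff p.1 x‖ * ‖coeff p.2 (x ^ k)‖ * (r ^ mdeg p.1 * r ^ mdeg p.2)
          = (‖coeff p.1 x‖ * r ^ mdeg p.1) * (‖coeff p.2 (x ^ k)‖ * r ^ mdeg p.2) := by
            ring
        _ ≤ q * q ^ k := mul_le_mul (hx p.1) (ih p.2) (by positivity) hq0
        _ = q ^ (k+1) := by ring
    calc ‖∑ p ∈ Finset.HasAntidiagonal.antidiagonal γ, coeff p.1 x * coeff p.2 (x ^ k)‖ * r ^ mdeg γ
        ≤ (q ^ (k+1) / r ^ mdeg γ) * r ^ mdeg γ := mul_le_mul_of_nonneg_right hb hrpow.le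
      _ = q ^ (k+1) := div_mul_cancel₀ _ hrpow.ne'

lemma pow_coeff_eq_zero {n : ℕ} (x : MvPowerSeries (Fin n) F)
    (hx : constantCoeff (σ := Fin n) x = 0) :
    ∀ (k : ℕ) (γ : Fin n →₀ ℕ), mdeg γ < k → coeff γ (x ^ k) = 0 := by
  intro k
  induction k with
  | zero => intro γ h; omega
  | succ k ih =>
    intro γ h
    rw [pow_succ, mul_comm (x ^ k) x, MvPowerSeries.coeff_mul]
    refine Finset.sum_eq_zero fun p hp => ?_
    have hpsum : p.1 + p.2 = γ := Finset.HasAntidiagonal.mem_antidiagonal.mp hp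
    by_cases h1 : p.1 = 0
    · have hz : coeff p.1 x = 0 := by
        rw [h1, MvPowerSeries.coeff_zero_eq_constantCoeff, hx]
      rw [hz, zero_mul]
    · have hm1 : mdeg p.1 ≠ 0 := fun hc => h1 (mdeg_eq_zero_iff.mp hc)
      have hmsum : mdeg p.1 + mdeg p.2 = mdeg γ := by rw [← mdeg_add, hpsum]
      rw [ih p.2 (by omega), mul_zero]

lemma exists_inverse {m : ℕ} {r : ℝ} (hr : 0 < r) (g : MvPowerSeries (Fin (m+1)) F)
    (hgA : g ∈ A F (m+1) r) (hgI : g ∈ indepLast F m) {c0 : F}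
    (hconst : constantCoeff (σ := Fin (m+1)) g = c0) (hc0 : c0 ≠ 0)
    {τ : ℝ} (hτ : ∀ γ : Fin (m+1) →₀ ℕ, γ ≠ 0 → ‖coeff γ g‖ * r ^ mdeg γ ≤ τ)
    (hτlt : τ < ‖c0‖) :
    ∃ G : MvPowerSeries (Fin (m+1)) F, g * G = 1 ∧ G ∈ A F (m+1) r ∧ G ∈ indepLast F m := by
  classical
  have hc0n : (0:ℝ) < ‖c0‖ := norm_pos_iff.mpr hc0
  have hτ0 : 0 ≤ τ := by
    refine le_trans ?_ (hτ (Finsupp.single (Fin.last m) 1) (by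
      intro hc
      have h2 := DFunLike.congr_fun hc (Fin.last m)
      simp at h2))
    positivity
  set x : MvPowerSeries (Fin (m+1)) F :=
    MvPowerSeries.C (σ := Fin (m+1)) c0⁻¹ * (MvPowerSeries.C (σ := Fin (m+1)) c0 - g) with hxdef
  have hxc : ∀ γ : Fin (m+1) →₀ ℕ, γ ≠ 0 → coeff γ x = -(c0⁻¹ * coeff γ g) := by
    intro γ hγ
    rw [hxdef, MvPowerSeries.coeff_C_mul, map_sub, MvPowerSeries.coeff_C, if_neg hγ]
    ring
  have hx0 : constantCoeff (σ := Fin (m+1)) x = 0 := by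
    rw [hxdef, map_mul, map_sub, MvPowerSeries.constantCoeff_C,
      MvPowerSeries.constantCoeff_C, hconst]
    ring
  set q : ℝ := τ / ‖c0‖ with hqdef
  have hq0 : 0 ≤ q := by positivity
  have hq1 : q < 1 := (div_lt_one hc0n).mpr hτlt
  have hxb : ∀ γ : Fin (m+1) →₀ ℕ, ‖coeff γ x‖ * r ^ mdeg γ ≤ q := by
    intro γ
    by_cases hγ : γ = 0
    · subst hγ
      rw [← MvPowerSeries.coeff_zero_eq_constantCoeff] at hx0
      rw [hx0, norm_zero, zero_mul]
      exact hq0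
    · rw [hxc γ hγ, norm_neg, norm_mul, norm_inv, hqdef, mul_assoc]
      rw [div_eq_inv_mul]
      exact mul_le_mul_of_nonneg_left (hτ γ hγ) (by positivity)
  have hxA : x ∈ A F (m+1) r :=
    (A F (m+1) r).mul_mem (C_mem_A F r _)
      ((A F (m+1) r).sub_mem (C_mem_A F r _) hgA)
  have hxI : x ∈ indepLast F m :=
    (indepLast F m).mul_mem (C_mem_indepLast F _)
      ((indepLast F m).sub_mem (C_mem_indepLast F _) hgI)
  set G : MvPowerSeries (Fin (m+1)) F :=
    fun γ => c0⁻¹ * ∑ k ∈ Finset.range (mdeg γ + 1), coeff γ (x ^ k) with hGdef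
  have hGc : ∀ (N : ℕ) (γ : Fin (m+1) →₀ ℕ), mdeg γ ≤ N →
      coeff γ G = c0⁻¹ * ∑ k ∈ Finset.range (N + 1), coeff γ (x ^ k) := by
    intro N γ hN
    rw [coeff_apply]
    show c0⁻¹ * ∑ k ∈ Finset.range (mdeg γ + 1), coeff γ (x ^ k) = _
    congr 1
    refine Finset.sum_subset (Finset.range_subset_range.mpr (by omega)) ?_
    intro k _ hk
    rw [Finset.mem_range, not_lt] at hk
    exact pow_coeff_eq_zero F x hx0 k γ (by omega)
  have hgfact : g = MvPowerSeries.C (σ := Fin (m+1)) c0 * (1 - x) := by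
    have hCC : MvPowerSeries.C (σ := Fin (m+1)) c0 * MvPowerSeries.C (σ := Fin (m+1)) c0⁻¹ = 1 := by
      rw [← map_mul, mul_inv_cancel₀ hc0, map_one]
    rw [hxdef, mul_sub, mul_one, ← mul_assoc, hCC, one_mul]
    ring
  have hmul : g * G = 1 := by
    ext γ
    have hcoeff : coeff γ (g * G) =
        coeff γ (g * (MvPowerSeries.C (σ := Fin (m+1)) c0⁻¹ *
          ∑ k ∈ Finset.range (mdeg γ + 1), x ^ k)) := by
      rw [MvPowerSeries.coeff_mul, MvPowerSeries.coeff_mul]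
      refine Finset.sum_congr rfl fun p hp => ?_
      have hpsum : p.1 + p.2 = γ := Finset.HasAntidiagonal.mem_antidiagonal.mp hp
      have hple : mdeg p.2 ≤ mdeg γ := by
        have := mdeg_add p.1 p.2
        rw [hpsum] at this
        omega
      congr 1
      rw [hGc (mdeg γ) p.2 hple, MvPowerSeries.coeff_C_mul, map_sum]
    rw [hcoeff]
    have hgeom : g * (MvPowerSeries.C (σ := Fin (m+1)) c0⁻¹ *
        ∑ k ∈ Finset.range (mdeg γ + 1), x ^ k) = 1 - x ^ (mdeg γ + 1) := by
      rw [hgfact]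
      have : MvPowerSeries.C (σ := Fin (m+1)) c0 * (1 - x) *
          (MvPowerSeries.C (σ := Fin (m+1)) c0⁻¹ * ∑ k ∈ Finset.range (mdeg γ + 1), x ^ k)
          = (MvPowerSeries.C (σ := Fin (m+1)) c0 * MvPowerSeries.C (σ := Fin (m+1)) c0⁻¹) *
            ((1 - x) * ∑ k ∈ Finset.range (mdeg γ + 1), x ^ k) := by ring
      rw [this, ← map_mul, mul_inv_cancel₀ hc0, map_one, one_mul]
      have hgs := geom_sum_mul x (mdeg γ + 1)
      calc (1 - x) * ∑ k ∈ Finset.range (mdeg γ + 1), x ^ k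
          = -((∑ k ∈ Finset.range (mdeg γ + 1), x ^ k) * (x - 1)) := by ring
        _ = -(x ^ (mdeg γ + 1) - 1) := by rw [hgs]
        _ = 1 - x ^ (mdeg γ + 1) := by ring
    rw [hgeom, map_sub, pow_coeff_eq_zero F x hx0 (mdeg γ + 1) γ (by omega), sub_zero]
  have hGI : G ∈ indepLast F m := by
    intro γ hγ
    rw [coeff_apply]
    show c0⁻¹ * ∑ k ∈ Finset.range (mdeg γ + 1), coeff γ (x ^ k) = 0
    rw [Finset.sum_eq_zero fun k _ => (indepLast F m).pow_mem hxI k γ hγ, mul_zero]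
  have hGA : G ∈ A F (m+1) r := by
    rw [mem_A_iff, Metric.tendsto_nhds]
    intro ε hε
    rw [Filter.eventually_cofinite]
    have hε2 : (0:ℝ) < ε / 2 * ‖c0‖ := by positivity
    obtain ⟨k0, hk0⟩ : ∃ k0 : ℕ, q ^ k0 < ε / 2 * ‖c0‖ := by
      obtain ⟨k0, hk0⟩ := ((tendsto_pow_atTop_nhds_zero_of_lt_one hq0 hq1).eventually
        (gt_mem_nhds hε2)).exists
      exact ⟨k0, hk0⟩
    have hSfin : ∀ k : ℕ, {γ : Fin (m+1) →₀ ℕ |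
        ε / 2 * ‖c0‖ ≤ ‖coeff γ (x ^ k)‖ * r ^ mdeg γ}.Finite := by
      intro k
      exact finite_ge_of_tendsto (fun γ : Fin (m+1) →₀ ℕ => ‖coeff γ (x ^ k)‖ * r ^ mdeg γ)
        ((mem_A_iff F).mp ((A F (m+1) r).pow_mem hxA k)) hε2
    have hbig : (⋃ k ∈ Finset.range k0, {γ : Fin (m+1) →₀ ℕ |
        ε / 2 * ‖c0‖ ≤ ‖coeff γ (x ^ k)‖ * r ^ mdeg γ}).Finite :=
      Set.Finite.biUnion (Finset.range k0).finite_toSet fun k _ => hSfin k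
    refine hbig.subset fun γ hγ => ?_
    by_contra hout
    apply hγ
    have hterm : ∀ k ∈ Finset.range (mdeg γ + 1),
        ‖coeff γ (x ^ k)‖ ≤ (ε / 2 * ‖c0‖) / r ^ mdeg γ := by
      intro k _
      have hrpow : (0:ℝ) < r ^ mdeg γ := pow_pos hr _
      rw [le_div_iff₀ hrpow]
      by_cases hk : k < k0
      · have hlt : ‖coeff γ (x ^ k)‖ * r ^ mdeg γ < ε / 2 * ‖c0‖ := by
          by_contra hc
          exact hout (Set.mem_biUnion (Finset.mem_coe.mpr (Finset.mem_range.mpr hk))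
            (not_lt.mp hc))
        exact hlt.le
      · calc ‖coeff γ (x ^ k)‖ * r ^ mdeg γ ≤ q ^ k := pow_coeff_bound F hr x hxb k γ
          _ ≤ q ^ k0 := pow_le_pow_of_le_one hq0 hq1.le (by omega)
          _ ≤ ε / 2 * ‖c0‖ := hk0.le
    have hval : ‖coeff γ G‖ * r ^ mdeg γ ≤ ε / 2 := by
      have hG : coeff γ G = c0⁻¹ * ∑ k ∈ Finset.range (mdeg γ + 1), coeff γ (x ^ k) :=
        hGc (mdeg γ) γ le_rfl
      have hrpow : (0:ℝ) < r ^ mdeg γ := pow_pos hr _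
      rw [hG, norm_mul, norm_inv]
      have hsum : ‖∑ k ∈ Finset.range (mdeg γ + 1), coeff γ (x ^ k)‖
          ≤ (ε / 2 * ‖c0‖) / r ^ mdeg γ :=
        norm_sum_le_max F _ _ (by positivity) hterm
      calc ‖c0‖⁻¹ * ‖∑ k ∈ Finset.range (mdeg γ + 1), coeff γ (x ^ k)‖ * r ^ mdeg γ
          ≤ ‖c0‖⁻¹ * ((ε / 2 * ‖c0‖) / r ^ mdeg γ) * r ^ mdeg γ := by
            refine mul_le_mul_of_nonneg_right (mul_le_mul_of_nonneg_left hsum (by positivity))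
              hrpow.le
        _ = ε / 2 * (‖c0‖⁻¹ * ‖c0‖) := by
            field_simp
        _ = ε / 2 := by rw [inv_mul_cancel₀ hc0n.ne', mul_one]
    rw [Real.dist_eq, sub_zero, abs_of_nonneg (by positivity)]
    calc ‖coeff γ G‖ * r ^ mdeg γ ≤ ε / 2 := hval
      _ < ε := by linarith
  exact ⟨G, hmul, hGA, hGI⟩

end Inverse


section Phi

variable (m : ℕ)

/-- Normalized coefficient, as an element of the ring of integers. -/
noncomputable def BB (f : MvPowerSeries (Fin (m+1)) F) (c : F) (t : Fin (m+1) → ℕ) : O F :=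
  if h : ‖coeff (Finsupp.equivFunOnFinite.symm t) f / c‖ ≤ 1 then
    ⟨coeff (Finsupp.equivFunOnFinite.symm t) f / c, h⟩ else 1

lemma BB_val (f : MvPowerSeries (Fin (m+1)) F) (c : F) (t : Fin (m+1) → ℕ)
    (h : ‖coeff (Finsupp.equivFunOnFinite.symm t) f / c‖ ≤ 1) :
    (BB F m f c t : F) = coeff (Finsupp.equivFunOnFinite.symm t) f / c := by
  rw [BB, dif_pos h]

/-- Restriction of an exponent tuple to the first `m` variables. -/
noncomputable def resT (t : Fin (m+1) → ℕ) : Fin m →₀ ℕ :=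
  Finsupp.equivFunOnFinite.symm (fun j : Fin m => t j.castSucc)

lemma resT_apply (t : Fin (m+1) → ℕ) (j : Fin m) : resT m t j = t j.castSucc := rfl

lemma resT_inj {d : ℕ} {t t' : Fin (m+1) → ℕ}
    (ht : t ∈ Finset.Nat.antidiagonalTuple (m+1) d)
    (ht' : t' ∈ Finset.Nat.antidiagonalTuple (m+1) d)
    (he : resT m t = resT m t') : t = t' := by
  have h1 : ∀ j : Fin m, t j.castSucc = t' j.castSucc := by
    intro j
    have h2 := DFunLike.congr_fun he j
    rwa [resT_apply, resT_apply] at h2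
  have h2 : ∑ i, t i = d := Finset.Nat.mem_antidiagonalTuple.mp ht
  have h3 : ∑ i, t' i = d := Finset.Nat.mem_antidiagonalTuple.mp ht'
  rw [Fin.sum_univ_castSucc] at h2 h3
  have hpart : ∑ j : Fin m, t j.castSucc = ∑ j : Fin m, t' j.castSucc :=
    Finset.sum_congr rfl fun j _ => h1 j
  have h4 : t (Fin.last m) = t' (Fin.last m) := by omega
  funext i
  exact Fin.lastCases h4 h1 i

/-- The reduction map to the residue field. -/
noncomputable def rho : O F →+* Res F := Ideal.Quotient.mk (mIdeal F)

/-- The generic-residue polynomial attached to `f`, `c` and `d`. -/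
noncomputable def phiPoly (f : MvPowerSeries (Fin (m+1)) F) (c : F) (d : ℕ) :
    MvPolynomial (Fin m) (Res F) :=
  ∑ t ∈ Finset.Nat.antidiagonalTuple (m+1) d,
    MvPolynomial.monomial (resT m t) (rho F (BB F m f c t))

lemma eval_phiPoly (f : MvPowerSeries (Fin (m+1)) F) (c : F) (d : ℕ)
    (u : Fin m → F) (hu : ∀ j, ‖u j‖ ≤ 1) :
    MvPolynomial.eval (fun j => red F (u j) (hu j)) (phiPoly F m f c d) =
      rho F (∑ t ∈ Finset.Nat.antidiagonalTuple (m+1) d,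
        BB F m f c t * ∏ j : Fin m, (⟨u j, hu j⟩ : O F) ^ t j.castSucc) := by
  rw [phiPoly, map_sum, map_sum]
  refine Finset.sum_congr rfl fun t ht => ?_
  rw [MvPolynomial.eval_monomial, map_mul, map_prod]
  congr 1
  rw [Finsupp.prod_fintype _ _ (fun j => pow_zero _)]
  refine Finset.prod_congr rfl fun j _ => ?_
  rw [map_pow, resT_apply]
  rfl

end Phi

/-- after a generic linear change of variables `σ_u`, a non-zero
`f ∈ A^m(R)` becomes `z_m`-distinguished in `A^m(r)`, with `|f ∘ σ_u|_r = |f|_r`. -/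
theorem statement8 [CompleteSpace F] [IsAlgClosed F]
    (hnt : ∃ c : F, c ≠ 0 ∧ ‖c‖ ≠ 1)
    (m : ℕ) (r R : ℝ) (hr : r ∈ VG F) (hR : R ∈ VG F) (hrR : r ≤ R)
    (f : MvPowerSeries (Fin (m+1)) F) (hf : f ∈ A F (m+1) R) (hf0 : f ≠ 0) :
    ∃ φ : MvPolynomial (Fin m) (Res F), φ ≠ 0 ∧
      ∀ (u : Fin m → F) (hu : ∀ j, ‖u j‖ ≤ 1),
        MvPolynomial.eval (fun j => red F (u j) (hu j)) φ ≠ 0 →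
        sigmaSub F m u f ∈ A F (m+1) r ∧
        (∃ n : ℕ, IsDistinguished F m r (sigmaSub F m u f) n) ∧
        nrm F r (sigmaSub F m u f) = nrm F r f := by
  classical
  obtain ⟨ρ0, hρ0, hρr⟩ := hr
  have hr0 : 0 < r := by rw [← hρr]; exact norm_pos_iff.mpr hρ0
  have hfA : f ∈ A F (m+1) r := A_mono F hr0 hrR hf
  have hfT : Tendsto (fun γ : Fin (m+1) →₀ ℕ => ‖coeff γ f‖ * r ^ mdeg γ)
      cofinite (nhds 0) := (mem_A_iff F).mp hfA
  set v : (Fin (m+1) →₀ ℕ) → ℝ := fun γ => ‖coeff γ f‖ * r ^ mdeg γ with hvdef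
  obtain ⟨γ1, hγ1⟩ : ∃ γ, coeff γ f ≠ 0 := by
    by_contra h
    push_neg at h
    exact hf0 (MvPowerSeries.ext fun γ => by rw [h γ, map_zero])
  have hvγ1 : 0 < v γ1 := mul_pos (norm_pos_iff.mpr hγ1) (pow_pos hr0 _)
  have hMx : {γ : Fin (m+1) →₀ ℕ | v γ1 ≤ v γ}.Finite := finite_ge_of_tendsto v hfT hvγ1
  have hMxne : hMx.toFinset.Nonempty := ⟨γ1, hMx.mem_toFinset.mpr (Set.mem_setOf_eq ▸ le_refl (v γ1))⟩
  obtain ⟨γa, hγa_mem, hγa⟩ := hMx.toFinset.exists_max_image v hMxne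
  have hmaxa : ∀ γ, v γ ≤ v γa := by
    intro γ
    by_cases hγ : v γ1 ≤ v γ
    · exact hγa γ (hMx.mem_toFinset.mpr hγ)
    · exact (not_le.mp hγ).le.trans (hγa γ1 (hMx.mem_toFinset.mpr (Set.mem_setOf_eq ▸ le_refl (v γ1))))
  set T := hMx.toFinset.filter (fun γ => v γ = v γa) with hT
  have hTne : T.Nonempty :=
    ⟨γa, Finset.mem_filter.mpr ⟨hγa_mem, rfl⟩⟩
  obtain ⟨γ0, hγ0T, hγ0max⟩ := T.exists_max_image (fun γ => mdeg γ) hTne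
  have hvγ0a : v γ0 = v γa := (Finset.mem_filter.mp hγ0T).2
  have hmax : ∀ γ, v γ ≤ v γ0 := fun γ => (hmaxa γ).trans_eq hvγ0a.symm
  have hdmax : ∀ γ, v γ = v γ0 → mdeg γ ≤ mdeg γ0 := by
    intro γ hγ
    refine hγ0max γ (Finset.mem_filter.mpr ⟨hMx.mem_toFinset.mpr ?_, hγ.trans hvγ0a⟩)
    show v γ1 ≤ v γ
    rw [hγ, hvγ0a]
    exact hγa γ1 (hMx.mem_toFinset.mpr (Set.mem_setOf_eq ▸ le_refl (v γ1)))
  set d := mdeg γ0 with hd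
  set c := coeff γ0 f with hc
  have hvc : v γ0 = ‖c‖ * r ^ d := rfl
  have hvγ0pos : 0 < v γ0 := lt_of_lt_of_le hvγ1 (hmax γ1)
  have hc0 : c ≠ 0 := by
    intro hcz
    rw [hvc, hcz, norm_zero, zero_mul] at hvγ0pos
    exact lt_irrefl 0 hvγ0pos
  -- strict bound above degree d
  obtain ⟨s, hs0, hslt, hs⟩ : ∃ s : ℝ, 0 ≤ s ∧ s < v γ0 ∧ ∀ γ, d < mdeg γ → v γ ≤ s := by
    have hW : {γ : Fin (m+1) →₀ ℕ | v γ0 / 2 ≤ v γ}.Finite :=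
      finite_ge_of_tendsto v hfT (by positivity)
    set W := hW.toFinset.filter (fun γ => d < mdeg γ) with hWdef
    rcases W.eq_empty_or_nonempty with hWe | hWne
    · refine ⟨v γ0 / 2, by positivity, by linarith, ?_⟩
      intro γ hγ
      by_contra hcon
      push_neg at hcon
      have hmem : γ ∈ W := Finset.mem_filter.mpr ⟨hW.mem_toFinset.mpr hcon.le, hγ⟩
      rw [hWe] at hmem
      exact absurd hmem (Finset.notMem_empty γ)
    · obtain ⟨γb, hγb_mem, hγb⟩ := W.exists_max_image v hWne
      refine ⟨max (v γ0 / 2) (v γb), le_max_of_le_left (by positivity), ?_, ?_⟩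
      · refine max_lt (by linarith) ?_
        refine lt_of_le_of_ne (hmax γb) ?_
        intro he
        have hds := hdmax γb he
        have hd2 := (Finset.mem_filter.mp hγb_mem).2
        omega
      · intro γ hγ
        by_cases hcase : v γ0 / 2 ≤ v γ
        · exact le_max_of_le_right
            (hγb γ (Finset.mem_filter.mpr ⟨hW.mem_toFinset.mpr hcase, hγ⟩))
        · exact le_max_of_le_left (not_le.mp hcase).le
  -- the normalized top-degree coefficients
  have hBole : ∀ t ∈ Finset.Nat.antidiagonalTuple (m+1) d,
      ‖coeff (Finsupp.equivFunOnFinite.symm t) f / c‖ ≤ 1 := by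
    intro t ht
    have hmd : mdeg (Finsupp.equivFunOnFinite.symm t) = d := by
      rw [mdeg_symm_tuple]
      exact Finset.Nat.mem_antidiagonalTuple.mp ht
    have h1 := hmax (Finsupp.equivFunOnFinite.symm t)
    rw [hvc] at h1
    have h2 : ‖coeff (Finsupp.equivFunOnFinite.symm t) f‖ * r ^ d ≤ ‖c‖ * r ^ d := by
      calc ‖coeff (Finsupp.equivFunOnFinite.symm t) f‖ * r ^ d
          = v (Finsupp.equivFunOnFinite.symm t) := by
            show _ = ‖coeff (Finsupp.equivFunOnFinite.symm t) f‖ *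
              r ^ mdeg (Finsupp.equivFunOnFinite.symm t)
            rw [hmd]
        _ ≤ ‖c‖ * r ^ d := h1
    have h3 : ‖coeff (Finsupp.equivFunOnFinite.symm t) f‖ ≤ ‖c‖ :=
      le_of_mul_le_mul_right h2 (pow_pos hr0 d)
    rw [norm_div]
    exact div_le_one_of_le₀ h3 (norm_nonneg c)
  have hBoval : ∀ t ∈ Finset.Nat.antidiagonalTuple (m+1) d,
      (BB F m f c t : F) = coeff (Finsupp.equivFunOnFinite.symm t) f / c :=
    fun t ht => BB_val F m f c t (hBole t ht)
  have ht0AT : Finsupp.equivFunOnFinite γ0 ∈ Finset.Nat.antidiagonalTuple (m+1) d := by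
    rw [Finset.Nat.mem_antidiagonalTuple]
    have h1 : ∀ i, Finsupp.equivFunOnFinite γ0 i = γ0 i := fun i => rfl
    rw [Finset.sum_congr rfl fun i _ => h1 i, ← mdeg_eq_sum]
  have hone : (1 : Res F) ≠ 0 := by
    intro h1
    have h2 : rho F 1 = 0 := by rw [map_one]; exact h1
    have h3 := Ideal.Quotient.eq_zero_iff_mem.mp h2
    have h4 : ‖((1 : O F) : F)‖ < 1 := h3
    rw [OneMemClass.coe_one, norm_one] at h4
    exact lt_irrefl 1 h4
  have hφ0 : phiPoly F m f c d ≠ 0 := by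
    intro hzero
    have hBoγ0 : BB F m f c (Finsupp.equivFunOnFinite γ0) = 1 := by
      apply Subtype.ext
      rw [hBoval _ ht0AT, OneMemClass.coe_one, Equiv.symm_apply_apply, ← hc, div_self hc0]
    have hcoeff : MvPolynomial.coeff (resT m (Finsupp.equivFunOnFinite γ0))
        (phiPoly F m f c d) = 1 := by
      rw [phiPoly, MvPolynomial.coeff_sum]
      rw [Finset.sum_eq_single (Finsupp.equivFunOnFinite γ0)]
      · rw [MvPolynomial.coeff_monomial, if_pos rfl, hBoγ0, map_one]
      · intro t ht hne
        rw [MvPolynomial.coeff_monomial, if_neg]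
        intro he
        exact hne (resT_inj m ht ht0AT he)
      · intro habs
        exact absurd ht0AT habs
    rw [hzero, MvPolynomial.coeff_zero] at hcoeff
    exact hone hcoeff.symm
  refine ⟨phiPoly F m f c d, hφ0, ?_⟩
  intro u hu heval
  -- the unit w
  set Wo : O F := ∑ t ∈ Finset.Nat.antidiagonalTuple (m+1) d,
    BB F m f c t * ∏ j : Fin m, (⟨u j, hu j⟩ : O F) ^ t j.castSucc with hWo
  have hWne : rho F Wo ≠ 0 := by
    rw [← eval_phiPoly F m f c d u hu]
    exact heval
  set w : F := (Wo : F) with hwdef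
  have hw1 : ‖w‖ = 1 := by
    refine le_antisymm Wo.2 ?_
    by_contra hlt
    push_neg at hlt
    exact hWne (Ideal.Quotient.eq_zero_iff_mem.mpr hlt)
  have hwn0 : w ≠ 0 := by
    intro h
    rw [h, norm_zero] at hw1
    exact zero_ne_one hw1
  have hwsum : w = ∑ t ∈ Finset.Nat.antidiagonalTuple (m+1) d,
      (BB F m f c t : F) * ∏ j : Fin m, u j ^ t j.castSucc := by
    show (O F).subtype Wo = _
    rw [hWo, map_sum]
    refine Finset.sum_congr rfl fun t _ => ?_
    rw [map_mul, map_prod]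
    refine congrArg _ (Finset.prod_congr rfl fun j _ => ?_)
    rw [map_pow]
    rfl
  -- the key coefficient
  have hkey : coeff (Finsupp.single (Fin.last m) d) (sigmaSub F m u f) = c * w := by
    rw [coeff_sigmaSub_single, hwsum, Finset.mul_sum]
    refine Finset.sum_congr rfl fun t ht => ?_
    rw [hBoval t ht, ← mul_assoc, mul_div_cancel₀ _ hc0]
  have hcw : ‖c * w‖ = ‖c‖ := by rw [norm_mul, hw1, mul_one]
  -- coefficient bounds for σf
  have hσb : ∀ δ, ∃ γ, mdeg γ = mdeg δ ∧
      ‖coeff δ (sigmaSub F m u f)‖ * r ^ mdeg δ ≤ v γ := by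
    intro δ
    obtain ⟨γ, hγd, hγle⟩ := coeff_sigmaSub_bound F m u hu f δ
    refine ⟨γ, hγd, ?_⟩
    rw [hvdef]
    rw [← hγd]
    exact mul_le_mul_of_nonneg_right hγle (pow_pos hr0 _).le
  have hσle : ∀ δ, ‖coeff δ (sigmaSub F m u f)‖ * r ^ mdeg δ ≤ v γ0 := by
    intro δ
    obtain ⟨γ, _, h⟩ := hσb δ
    exact h.trans (hmax γ)
  have hσs : ∀ δ, d < mdeg δ → ‖coeff δ (sigmaSub F m u f)‖ * r ^ mdeg δ ≤ s := by
    intro δ hδ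
    obtain ⟨γ, hγd, h⟩ := hσb δ
    exact h.trans (hs γ (by omega))
  have hσA : sigmaSub F m u f ∈ A F (m+1) r := by
    rw [mem_A_iff]
    refine tendsto_of_shell_bound _ (fun δ => by positivity) ?_
    intro ε hε
    obtain ⟨N, hN⟩ := shell_bound_of_tendsto v hfT hε
    refine ⟨N, fun δ hδ => ?_⟩
    obtain ⟨γ, hγd, h⟩ := hσb δ
    exact lt_of_le_of_lt h (hN γ (by omega))
  -- the norm identities
  have hnf : nrm F r f = v γ0 := le_antisymm (nrm_le F hmax) (le_nrm F hmax γ0)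
  have hvsingle : ‖coeff (Finsupp.single (Fin.last m) d) (sigmaSub F m u f)‖ *
      r ^ mdeg (Finsupp.single (Fin.last m) d) = v γ0 := by
    rw [hkey, hcw, mdeg_single, hvc]
  have hnσ : nrm F r (sigmaSub F m u f) = v γ0 :=
    le_antisymm (nrm_le F hσle) (by rw [← hvsingle]; exact le_nrm F hσle _)
  -- slices
  have hslice_coeff : ∀ (j : ℕ) (γ : Fin (m+1) →₀ ℕ),
      coeff γ (slice F m (sigmaSub F m u f) j) =
        if γ (Fin.last m) = 0 then
          coeff (γ + Finsupp.single (Fin.last m) j) (sigmaSub F m u f) else 0 :=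
    fun j γ => rfl
  have hmadd : ∀ (γ : Fin (m+1) →₀ ℕ) (j : ℕ),
      mdeg (γ + Finsupp.single (Fin.last m) j) = mdeg γ + j := by
    intro γ j
    rw [mdeg_add, mdeg_single]
  have hsliceval : ∀ (j : ℕ) (γ : Fin (m+1) →₀ ℕ), γ (Fin.last m) = 0 →
      ‖coeff γ (slice F m (sigmaSub F m u f) j)‖ * r ^ mdeg γ * r ^ j =
        ‖coeff (γ + Finsupp.single (Fin.last m) j) (sigmaSub F m u f)‖ *
          r ^ mdeg (γ + Finsupp.single (Fin.last m) j) := by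
    intro j γ h0
    rw [hslice_coeff, if_pos h0, hmadd, pow_add, mul_assoc]
  -- slice d is in Aprev
  have hgdA : slice F m (sigmaSub F m u f) d ∈ A F (m+1) r := by
    rw [mem_A_iff]
    refine tendsto_of_shell_bound _ (fun γ => by positivity) ?_
    intro ε hε
    have hεr : 0 < ε * r ^ d := by positivity
    obtain ⟨N, hN⟩ := shell_bound_of_tendsto _ ((mem_A_iff F).mp hσA) hεr
    refine ⟨N, fun γ hγ => ?_⟩
    by_cases h0 : γ (Fin.last m) = 0
    · have h1 := hsliceval d γ h0
      have h2 := hN (γ + Finsupp.single (Fin.last m) d) (by rw [hmadd]; omega)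
      have h3 : ‖coeff γ (slice F m (sigmaSub F m u f) d)‖ * r ^ mdeg γ * r ^ d
          < ε * r ^ d := by rw [h1]; exact h2
      exact lt_of_mul_lt_mul_right h3 (pow_pos hr0 d).le
    · rw [hslice_coeff, if_neg h0, norm_zero, zero_mul]
      exact hε
  have hgdI : slice F m (sigmaSub F m u f) d ∈ indepLast F m := by
    intro γ hγ
    rw [hslice_coeff, if_neg hγ]
  have hgdAprev : slice F m (sigmaSub F m u f) d ∈ Aprev F m r :=
    Subring.mem_inf.mpr ⟨hgdA, hgdI⟩
  have hzl : ((0 : Fin (m+1) →₀ ℕ) : Fin (m+1) → ℕ) (Fin.last m) = 0 := rfl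
  have hconst : constantCoeff (σ := Fin (m+1)) (slice F m (sigmaSub F m u f) d) = c * w := by
    rw [← MvPowerSeries.coeff_zero_eq_constantCoeff, hslice_coeff, if_pos hzl, zero_add, hkey]
  have hcwne : c * w ≠ 0 := mul_ne_zero hc0 hwn0
  have hτb : ∀ γ : Fin (m+1) →₀ ℕ, γ ≠ 0 →
      ‖coeff γ (slice F m (sigmaSub F m u f) d)‖ * r ^ mdeg γ ≤ s / r ^ d := by
    intro γ hγ
    by_cases h0 : γ (Fin.last m) = 0
    · have h1 := hsliceval d γ h0
      have hmd : d < mdeg (γ + Finsupp.single (Fin.last m) d) := by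
        rw [hmadd]
        have hne : mdeg γ ≠ 0 := fun hz => hγ (mdeg_eq_zero_iff.mp hz)
        omega
      have h2 := hσs _ hmd
      rw [le_div_iff₀ (pow_pos hr0 d)]
      rw [h1]
      exact h2
    · rw [hslice_coeff, if_neg h0, norm_zero, zero_mul]
      positivity
  have hτlt : s / r ^ d < ‖c * w‖ := by
    rw [hcw, div_lt_iff₀ (pow_pos hr0 d), ← hvc]
    exact hslt
  obtain ⟨G, hGmul, hGA, hGI⟩ := exists_inverse F hr0 (slice F m (sigmaSub F m u f) d)
    hgdA hgdI hconst hcwne hτb hτlt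
  have hunit : IsUnit (⟨slice F m (sigmaSub F m u f) d, hgdAprev⟩ : Aprev F m r) := by
    refine IsUnit.of_mul_eq_one ⟨G, Subring.mem_inf.mpr ⟨hGA, hGI⟩⟩ ?_
    apply Subtype.ext
    exact hGmul
  -- norm of slice d
  have hub : ∀ γ : Fin (m+1) →₀ ℕ,
      ‖coeff γ (slice F m (sigmaSub F m u f) d)‖ * r ^ mdeg γ ≤ ‖c‖ := by
    intro γ
    by_cases h0 : γ (Fin.last m) = 0
    · have h1 := hsliceval d γ h0
      have h2 := hσle (γ + Finsupp.single (Fin.last m) d)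
      have h3 : ‖coeff γ (slice F m (sigmaSub F m u f) d)‖ * r ^ mdeg γ * r ^ d
          ≤ ‖c‖ * r ^ d := by
        rw [h1, ← hvc]
        exact h2
      exact le_of_mul_le_mul_right h3 (pow_pos hr0 d)
    · rw [hslice_coeff, if_neg h0, norm_zero, zero_mul]
      exact norm_nonneg c
  have hnd : nrm F r (slice F m (sigmaSub F m u f) d) = ‖c‖ := by
    refine le_antisymm (nrm_le F hub) ?_
    have h0 := le_nrm F hub 0
    rw [hslice_coeff, if_pos hzl, zero_add, hkey, mdeg_zero, pow_zero, mul_one, hcw] at h0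
    exact h0
  refine ⟨hσA, ⟨d, ⟨hgdAprev, hunit⟩, ?_, ?_⟩, by rw [hnσ, hnf]⟩
  · rw [hnσ, hnd, hvc]
  · intro j hj
    have hubj : ∀ γ : Fin (m+1) →₀ ℕ,
        ‖coeff γ (slice F m (sigmaSub F m u f) j)‖ * r ^ mdeg γ ≤ s / r ^ j := by
      intro γ
      by_cases h0 : γ (Fin.last m) = 0
      · have h1 := hsliceval j γ h0
        have hmd : d < mdeg (γ + Finsupp.single (Fin.last m) j) := by
          rw [hmadd]
          omega
        have h2 := hσs _ hmd
        rw [le_div_iff₀ (pow_pos hr0 j), h1]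
        exact h2
      · rw [hslice_coeff, if_neg h0, norm_zero, zero_mul]
        positivity
    have hnj : nrm F r (slice F m (sigmaSub F m u f) j) ≤ s / r ^ j := nrm_le F hubj
    calc nrm F r (slice F m (sigmaSub F m u f) j) * r ^ j
        ≤ (s / r ^ j) * r ^ j := mul_le_mul_of_nonneg_right hnj (pow_pos hr0 j).le
      _ = s := div_mul_cancel₀ _ (pow_pos hr0 j).ne'
      _ < v γ0 := hslt
      _ = nrm F r (slice F m (sigmaSub F m u f) d) * r ^ d := by rw [hnd, hvc]


end NA
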